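/- In a Beth-Kripke model M, for every epistemic formula φ and node α of a Beth world: α ⊩_M φ if and only if there is a bar B for α such that every β ∈ B forces φ under ⊩_M. -/
import Mathlib


/-- A path through `α`: a maximal chain containing `α`. -/
def IsPath {Q : Type} [PartialOrder Q] (α : Q) (P : Set Q) : Prop :=
  α ∈ P ∧ IsChain (· ≤ ·) P ∧ ∀ P' : Set Q, IsChain (· ≤ ·) P' → P ⊆ P' → P' = P

/-- A bar for `α`: a set meeting every path through `α`. -/
def IsBar {Q : Type} [PartialOrder Q] (α : Q) (B : Set Q) : Prop :=
  ∀ P : Set Q, IsPath α P → (B ∩ P).Nonempty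

/-- Epistemic formulas over agents `Ag` and atoms `At`. -/
inductive EForm (Ag At : Type) : Type
  | atom : At → EForm Ag At
  | and  : EForm Ag At → EForm Ag At → EForm Ag At
  | or   : EForm Ag At → EForm Ag At → EForm Ag At
  | imp  : EForm Ag At → EForm Ag At → EForm Ag At
  | neg  : EForm Ag At → EForm Ag At
  | know : Ag → EForm Ag At → EForm Ag At

/-- A Beth-Kripke model: a set of pointed (rooted) Beth worlds with accessibility
relations between worlds. -/
structure BK (Ag At : Type) where
  S : Type
  Node : S → Type
  [ord : ∀ s, PartialOrder (Node s)]
  root : ∀ s, Node s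
  root_le : ∀ (s : S) (β : Node s), root s ≤ β
  F : ∀ s, Node s → Set At
  F_mono : ∀ {s : S} {a b : Node s}, a ≤ b → F s a ⊆ F s b
  acc : Ag → S → S → Prop

attribute [instance] BK.ord

/-- Epistemic Beth forcing `α ⊩_M φ` at node `α` of world `s`. -/
def BK.force {Ag At : Type} (M : BK Ag At) : EForm Ag At → ∀ s : M.S, M.Node s → Prop
  | .atom p, s, α => ∃ B, IsBar α B ∧ ∀ β ∈ B, p ∈ M.F s β
  | .and A B, s, α => M.force A s α ∧ M.force B s α
  | .or A B, s, α => ∃ Bb, IsBar α Bb ∧ ∀ β ∈ Bb, M.force A s β ∨ M.force B s β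
  | .imp A B, s, α => ∀ β, α ≤ β → M.force A s β → M.force B s β
  | .neg A, s, α => ∀ β, α ≤ β → ¬ M.force A s β
  | .know i A, s, _ => ∀ t, M.acc i s t → ∀ β : M.Node t, M.force A t β

lemma exists_path_through {Q : Type} [PartialOrder Q] {s : Set Q}
    (hs : IsChain (· ≤ ·) s) {α : Q} (hα : α ∈ s) : ∃ P, IsPath α P ∧ s ⊆ P := by
  obtain ⟨t, ⟨ht, hmax⟩, hst⟩ := hs.exists_maxChain
  exact ⟨t, ⟨hst hα, ht, fun P' h h' => (hmax h h').symm⟩, hst⟩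

lemma singleton_isBar {Q : Type} [PartialOrder Q] (α : Q) : IsBar α {α} :=
  fun P hP => ⟨α, rfl, hP.1⟩

lemma isBar_nonempty {Q : Type} [PartialOrder Q] {α : Q} {B : Set Q}
    (hB : IsBar α B) : ∃ β, β ∈ B := by
  obtain ⟨P, hP, -⟩ := exists_path_through (Set.subsingleton_singleton.isChain)
    (Set.mem_singleton α)
  obtain ⟨β, hβ, -⟩ := hB P hP
  exact ⟨β, hβ⟩

/-- Key combinatorial lemma: if `α ≤ γ`, `B` is a bar for `α` and `P` a path
through `γ`, then some `β ∈ B` satisfies `β ≤ γ` or (`γ ≤ β` and `β ∈ P`). -/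
lemma bar_meets_above {Q : Type} [PartialOrder Q] {α γ : Q} (hle : α ≤ γ)
    {B : Set Q} (hB : IsBar α B) {P : Set Q} (hP : IsPath γ P) :
    ∃ β ∈ B, β ≤ γ ∨ (γ ≤ β ∧ β ∈ P) := by
  set C : Set Q := insert α {q ∈ P | γ ≤ q} with hC
  have hCchain : IsChain (· ≤ ·) C := by
    intro x hx y hy hxy
    rcases hx with rfl | ⟨hxP, hxγ⟩
    · rcases hy with rfl | ⟨hyP, hyγ⟩
      · exact absurd rfl hxy
      · exact Or.inl (hle.trans hyγ)
    · rcases hy with rfl | ⟨hyP, hyγ⟩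
      · exact Or.inr (hle.trans hxγ)
      · exact hP.2.1 hxP hyP hxy
  obtain ⟨P'', hP'', hCP⟩ := exists_path_through hCchain (Set.mem_insert α _)
  obtain ⟨β, hβB, hβP''⟩ := hB P'' hP''
  refine ⟨β, hβB, ?_⟩
  have hγC : γ ∈ C := Or.inr ⟨hP.1, le_refl γ⟩
  have hγP'' : γ ∈ P'' := hCP hγC
  rcases eq_or_ne β γ with rfl | hne
  · exact Or.inl le_rfl
  rcases hP''.2.1 hβP'' hγP'' hne with h | h
  · exact Or.inl h
  · refine Or.inr ⟨h, ?_⟩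
    -- β is comparable to everything in P, hence in P by maximality of P.
    have hcomp : ∀ p ∈ P, p ≤ β ∨ β ≤ p := by
      intro p hp
      rcases eq_or_ne p γ with rfl | hpne
      · exact Or.inl h
      rcases hP.2.1 hp hP.1 hpne with hpγ | hγp
      · exact Or.inl (hpγ.trans h)
      · have hpC : p ∈ C := Or.inr ⟨hp, hγp⟩
        rcases eq_or_ne p β with rfl | hpe
        · exact Or.inl le_rfl
        · exact hP''.2.1 (hCP hpC) hβP'' hpe
    have hchain : IsChain (· ≤ ·) (insert β P) := by
      intro x hx y hy hxy
      rcases hx with rfl | hx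
      · rcases hy with rfl | hy
        · exact absurd rfl hxy
        · exact (hcomp y hy).symm.imp id id
      · rcases hy with rfl | hy
        · exact hcomp x hx
        · exact hP.2.1 hx hy hxy
    have := hP.2.2 (insert β P) hchain (Set.subset_insert _ _)
    rw [← this]
    exact Set.mem_insert _ _

/-- Monotonicity of epistemic Beth forcing. -/
lemma BK.force_mono {Ag At : Type} (M : BK Ag At) (φ : EForm Ag At) (s : M.S) :
    ∀ {α γ : M.Node s}, α ≤ γ → M.force φ s α → M.force φ s γ := by
  induction φ with
  | atom p =>
    rintro α γ hle ⟨B, hB, hBp⟩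
    refine ⟨{δ | p ∈ M.F s δ}, ?_, fun β hβ => hβ⟩
    intro P hP
    obtain ⟨β, hβB, hcase⟩ := bar_meets_above hle hB hP
    rcases hcase with hβγ | ⟨hγβ, hβP⟩
    · exact ⟨γ, M.F_mono hβγ (hBp β hβB), hP.1⟩
    · exact ⟨β, hBp β hβB, hβP⟩
  | and A B ihA ihB =>
    rintro α γ hle ⟨hA, hB⟩
    exact ⟨ihA hle hA, ihB hle hB⟩
  | or A B ihA ihB =>
    rintro α γ hle ⟨Bb, hBb, hfor⟩
    refine ⟨{δ | M.force A s δ ∨ M.force B s δ}, ?_, fun β hβ => hβ⟩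
    intro P hP
    obtain ⟨β, hβB, hcase⟩ := bar_meets_above hle hBb hP
    rcases hcase with hβγ | ⟨hγβ, hβP⟩
    · exact ⟨γ, (hfor β hβB).imp (ihA hβγ) (ihB hβγ), hP.1⟩
    · exact ⟨β, hfor β hβB, hβP⟩
  | imp A B ihA ihB =>
    intro α γ hle h δ hδ hA
    exact h δ (hle.trans hδ) hA
  | neg A ih =>
    intro α γ hle h δ hδ hA
    exact h δ (hle.trans hδ) hA
  | know i A ih =>
    intro α γ _ h
    exact h

/-- `α ⊩_M φ` iff some bar for `α` forces `φ` throughout. -/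
theorem epistemic_force_iff_bar {Ag At : Type} (M : BK Ag At)
    (φ : EForm Ag At) (s : M.S) (α : M.Node s) :
    M.force φ s α ↔ ∃ B, IsBar α B ∧ ∀ β ∈ B, M.force φ s β := by
  induction φ generalizing α with
  | atom p =>
    constructor
    · intro h
      exact ⟨{α}, singleton_isBar α, by rintro β rfl; exact h⟩
    · rintro ⟨Bb, hBb, hfor⟩
      refine ⟨{δ | p ∈ M.F s δ}, ?_, fun β hβ => hβ⟩
      intro P hP
      obtain ⟨β, hβB, hβP⟩ := hBb P hP
      obtain ⟨Bβ, hBβ, hBβp⟩ := hfor β hβB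
      obtain ⟨δ, hδB, hδP⟩ := hBβ P ⟨hβP, hP.2⟩
      exact ⟨δ, hBβp δ hδB, hδP⟩
  | and A B ihA ihB =>
    constructor
    · intro h
      exact ⟨{α}, singleton_isBar α, by rintro β rfl; exact h⟩
    · rintro ⟨Bb, hBb, hfor⟩
      exact ⟨(ihA α).2 ⟨Bb, hBb, fun β hβ => (hfor β hβ).1⟩,
             (ihB α).2 ⟨Bb, hBb, fun β hβ => (hfor β hβ).2⟩⟩
  | or A B ihA ihB =>
    constructor
    · intro h
      exact ⟨{α}, singleton_isBar α, by rintro β rfl; exact h⟩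
    · rintro ⟨Bb, hBb, hfor⟩
      refine ⟨{δ | M.force A s δ ∨ M.force B s δ}, ?_, fun β hβ => hβ⟩
      intro P hP
      obtain ⟨β, hβB, hβP⟩ := hBb P hP
      obtain ⟨Bβ, hBβ, hBβor⟩ := hfor β hβB
      obtain ⟨δ, hδB, hδP⟩ := hBβ P ⟨hβP, hP.2⟩
      exact ⟨δ, hBβor δ hδB, hδP⟩
  | imp A B ihA ihB =>
    constructor
    · intro h
      exact ⟨{α}, singleton_isBar α, by rintro β rfl; exact h⟩
    · rintro ⟨Bb, hBb, hfor⟩ γ hαγ hAγ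
      refine (ihB γ).2 ⟨{δ | M.force B s δ}, ?_, fun δ hδ => hδ⟩
      intro P hP
      obtain ⟨β, hβB, hcase⟩ := bar_meets_above hαγ hBb hP
      rcases hcase with hβγ | ⟨hγβ, hβP⟩
      · exact ⟨γ, hfor β hβB γ hβγ hAγ, hP.1⟩
      · exact ⟨β, hfor β hβB β le_rfl (M.force_mono A s hγβ hAγ), hβP⟩
  | neg A ih =>
    constructor
    · intro h
      exact ⟨{α}, singleton_isBar α, by rintro β rfl; exact h⟩
    · rintro ⟨Bb, hBb, hfor⟩ γ hαγ hAγ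
      obtain ⟨P, hP, -⟩ := exists_path_through (Set.subsingleton_singleton.isChain)
        (Set.mem_singleton γ)
      obtain ⟨β, hβB, hcase⟩ := bar_meets_above hαγ hBb hP
      rcases hcase with hβγ | ⟨hγβ, -⟩
      · exact hfor β hβB γ hβγ hAγ
      · exact hfor β hβB β le_rfl (M.force_mono A s hγβ hAγ)
  | know i A ih =>
    constructor
    · intro h
      exact ⟨{α}, singleton_isBar α, by rintro β rfl; exact h⟩
    · rintro ⟨Bb, hBb, hfor⟩
      obtain ⟨β, hβ⟩ := isBar_nonempty hBb
      exact hfor β hβ
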